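/- The double-collision configurations c and d lie on the unit sphere of the moment-of-inertia norm and satisfy 0 < cᵀMd < 1: one has c ∈ Q, d ∈ Q, cᵀMc = 1, dᵀMd = 1, and 0 < cᵀMd < 1. In particular there is a unique λ ∈ (0, π/4) with cos(2λ) = cᵀMd. -/

import Mathlib

open Real Matrix

private lemma sqrt_eq_of_eq_sq {a x : ℝ} (hx : 0 ≤ x) (h : a = x ^ 2) :
    Real.sqrt a = x := by rw [h, Real.sqrt_sq hx]

theorem double_collision_configurations
    (m1 m2 m3 : ℝ) (hm1 : 0 < m1) (hm2 : 0 < m2) (hm3 : 0 < m3)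
    (M : Matrix (Fin 3) (Fin 3) ℝ) (hM : M = Matrix.diagonal ![m1, m2, m3])
    (c d : Fin 3 → ℝ)
    (hc : c = ![-Real.sqrt (m3 / ((m1 + m2) * (m1 + m2 + m3))),
                -Real.sqrt (m3 / ((m1 + m2) * (m1 + m2 + m3))),
                Real.sqrt ((m1 + m2) / (m3 * (m1 + m2 + m3)))])
    (hd : d = ![-Real.sqrt ((m2 + m3) / (m1 * (m1 + m2 + m3))),
                Real.sqrt (m1 / ((m2 + m3) * (m1 + m2 + m3))),
                Real.sqrt (m1 / ((m2 + m3) * (m1 + m2 + m3)))]) :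
    (m1 * c 0 + m2 * c 1 + m3 * c 2 = 0) ∧
    (m1 * d 0 + m2 * d 1 + m3 * d 2 = 0) ∧
    c ⬝ᵥ M.mulVec c = 1 ∧
    d ⬝ᵥ M.mulVec d = 1 ∧
    0 < c ⬝ᵥ M.mulVec d ∧ c ⬝ᵥ M.mulVec d < 1 ∧
    (∃! lam : ℝ, lam ∈ Set.Ioo 0 (Real.pi / 4) ∧
      Real.cos (2 * lam) = c ⬝ᵥ M.mulVec d) := by
  have hm12 : (0:ℝ) < m1 + m2 := by linarith
  have hm23 : (0:ℝ) < m2 + m3 := by linarith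
  have hm : (0:ℝ) < m1 + m2 + m3 := by linarith
  obtain ⟨r1, hr1p, hr1⟩ : ∃ r : ℝ, 0 < r ∧ r ^ 2 = m1 :=
    ⟨Real.sqrt m1, Real.sqrt_pos.2 hm1, Real.sq_sqrt hm1.le⟩
  obtain ⟨r3, hr3p, hr3⟩ : ∃ r : ℝ, 0 < r ∧ r ^ 2 = m3 :=
    ⟨Real.sqrt m3, Real.sqrt_pos.2 hm3, Real.sq_sqrt hm3.le⟩
  obtain ⟨p, hpp, hp⟩ : ∃ r : ℝ, 0 < r ∧ r ^ 2 = m1 + m2 :=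
    ⟨Real.sqrt _, Real.sqrt_pos.2 hm12, Real.sq_sqrt hm12.le⟩
  obtain ⟨q, hqp, hq⟩ : ∃ r : ℝ, 0 < r ∧ r ^ 2 = m2 + m3 :=
    ⟨Real.sqrt _, Real.sqrt_pos.2 hm23, Real.sq_sqrt hm23.le⟩
  obtain ⟨t, htp, ht⟩ : ∃ r : ℝ, 0 < r ∧ r ^ 2 = m1 + m2 + m3 :=
    ⟨Real.sqrt _, Real.sqrt_pos.2 hm, Real.sq_sqrt hm.le⟩
  subst hr1 hr3
  have hm2eq : m2 = p ^ 2 - r1 ^ 2 := by linarith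
  subst hm2eq
  have hq' : q ^ 2 = p ^ 2 - r1 ^ 2 + r3 ^ 2 := by linarith
  have ht' : t ^ 2 = p ^ 2 + r3 ^ 2 := by linarith
  have e1 : Real.sqrt (r3 ^ 2 / ((r1 ^ 2 + (p ^ 2 - r1 ^ 2)) * (r1 ^ 2 + (p ^ 2 - r1 ^ 2) + r3 ^ 2))) = r3 / (p * t) := by
    apply sqrt_eq_of_eq_sq (by positivity)
    field_simp
    linear_combination p ^ 2 * ht'
  have e2 : Real.sqrt ((r1 ^ 2 + (p ^ 2 - r1 ^ 2)) / (r3 ^ 2 * (r1 ^ 2 + (p ^ 2 - r1 ^ 2) + r3 ^ 2))) = p / (r3 * t) := by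
    apply sqrt_eq_of_eq_sq (by positivity)
    field_simp
    linear_combination p ^ 2 * ht'
  have e3 : Real.sqrt (((p ^ 2 - r1 ^ 2) + r3 ^ 2) / (r1 ^ 2 * (r1 ^ 2 + (p ^ 2 - r1 ^ 2) + r3 ^ 2))) = q / (r1 * t) := by
    apply sqrt_eq_of_eq_sq (by positivity)
    field_simp
    linear_combination (-(t ^ 2)) * hq' + (q ^ 2) * ht'
  have e4 : Real.sqrt (r1 ^ 2 / (((p ^ 2 - r1 ^ 2) + r3 ^ 2) * (r1 ^ 2 + (p ^ 2 - r1 ^ 2) + r3 ^ 2))) = r1 / (q * t) := by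
    apply sqrt_eq_of_eq_sq (by positivity)
    field_simp
    linear_combination t ^ 2 * hq' + (p ^ 2 - r1 ^ 2 + r3 ^ 2) * ht'
  subst hM hc hd
  simp only [dotProduct, Matrix.mulVec_diagonal, Fin.sum_univ_three,
    Matrix.cons_val_zero, Matrix.cons_val_one, Matrix.head_cons, Matrix.cons_val_two,
    Matrix.tail_cons, e1, e2, e3, e4]
  have hinner : -(r3 / (p * t)) * (r1 ^ 2 * -(q / (r1 * t))) +
      -(r3 / (p * t)) * ((p ^ 2 - r1 ^ 2) * (r1 / (q * t))) +
      p / (r3 * t) * (r3 ^ 2 * (r1 / (q * t))) = r1 * r3 / (p * q) := by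
    field_simp
    linear_combination hq' - ht'
  have hv0 : 0 < r1 * r3 / (p * q) := by positivity
  have hv1 : r1 * r3 / (p * q) < 1 := by
    rw [div_lt_one (by positivity)]
    refine lt_of_pow_lt_pow_left₀ 2 (by positivity) ?_
    nlinarith [mul_pos (show (0:ℝ) < p ^ 2 + r3 ^ 2 by positivity) hm2]
  refine ⟨?_, ?_, ?_, ?_, ?_, ?_, ?_⟩
  · field_simp
    ring
  · field_simp
    linear_combination (-r1) * hq'
  · field_simp
    linear_combination (-(p ^ 2)) * ht'
  · field_simp
    linear_combination (q ^ 2 - r1 ^ 2) * hq' + (-(q ^ 2)) * ht'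
  · rw [hinner]; exact hv0
  · rw [hinner]; exact hv1
  · rw [hinner]
    refine ⟨Real.arccos (r1 * r3 / (p * q)) / 2, ⟨⟨?_, ?_⟩, ?_⟩, ?_⟩
    · exact div_pos (Real.arccos_pos.2 hv1) two_pos
    · have := Real.arccos_lt_pi_div_two.2 hv0
      linarith
    · have h2 : 2 * (Real.arccos (r1 * r3 / (p * q)) / 2) =
        Real.arccos (r1 * r3 / (p * q)) := by ring
      rw [h2, Real.cos_arccos (by linarith) hv1.le]
    · rintro y ⟨⟨hy1, hy2⟩, hy3⟩
      have hpi : 2 * y ≤ Real.pi := by linarith [Real.pi_pos.le]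
      have h2y : Real.arccos (Real.cos (2 * y)) = 2 * y :=
        Real.arccos_cos (by linarith) hpi
      rw [hy3] at h2y
      linarith
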